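/- Let Φ(θ) = w_{k}(Δθ)^{k} + w_{k-2}(Δθ)^{k-2} + ⋯ + w₁(Δθ) + w₀ + R(Δθ), where k ≥ 2, Δθ = θ − θ₀, |w_k| ≥ c > 0, the (k−1)-degree coefficient is absent, |w_j| ≤ s^{k-j} for all 0 ≤ j ≤ k−2 for some 0 < s ≤ 1, and |R(Δθ)| ≤ A|Δθ|^{k+1}. Then there exist constants C, δ > 0 depending only on k, c, A such that |Φ(θ)| ≥ (c/2)|Δθ|^k whenever C s ≤ |Δθ| ≤ δ. -/

import Mathlib

/-- if `Φ(θ) = ∑_{j≤k} w_j (θ−θ₀)^j + R(θ−θ₀)` with `|w_k| ≥ c`,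
vanishing coefficient of degree `k−1`, `|w_j| ≤ s^{k−j}` for `j ≤ k−2`, and
`|R(x)| ≤ A|x|^{k+1}`, then there are `C, δ > 0` depending only on `k, c, A` such
that `|Φ(θ)| ≥ (c/2)|θ−θ₀|^k` whenever `Cs ≤ |θ−θ₀| ≤ δ`. -/
theorem stmt_13 (k : ℕ) (hk : 2 ≤ k) (c A : ℝ) (hc : 0 < c) (hA : 0 < A) :
    ∃ C δ : ℝ, 0 < C ∧ 0 < δ ∧
      ∀ (Φ R : ℝ → ℝ) (θ₀ : ℝ) (w : ℕ → ℝ) (s : ℝ), 0 < s → s ≤ 1 →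
        (∀ θ : ℝ, Φ θ = (∑ j ∈ Finset.range (k + 1), w j * (θ - θ₀) ^ j) + R (θ - θ₀)) →
        w (k - 1) = 0 → c ≤ |w k| →
        (∀ j : ℕ, j ≤ k - 2 → |w j| ≤ s ^ (k - j)) →
        (∀ x : ℝ, |R x| ≤ A * |x| ^ (k + 1)) →
        ∀ θ : ℝ, C * s ≤ |θ - θ₀| → |θ - θ₀| ≤ δ →
          c / 2 * |θ - θ₀| ^ k ≤ |Φ θ| := by
  refine ⟨1 + 4 * k / c, min 1 (c / (4 * A)), by positivity, ?_, ?_⟩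
  · exact lt_min one_pos (by positivity)
  intro Φ R θ₀ w s hs hs1 hΦ hw1 hwk hwj hR θ hxl hxu
  set C : ℝ := 1 + 4 * k / c with hCdef
  set x : ℝ := θ - θ₀ with hx
  have hC1 : (1:ℝ) ≤ C := le_add_of_nonneg_right (by positivity)
  have hC0 : (0:ℝ) < C := lt_of_lt_of_le one_pos hC1
  have hxpos : 0 < |x| := lt_of_lt_of_le (by positivity) hxl
  have hsle : s ≤ |x| / C := (le_div_iff₀' hC0).mpr hxl
  -- split the sum
  have h1 : k - 1 + 1 = k := by omega
  have h2 : ∑ j ∈ Finset.range (k + 1), w j * x ^ j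
      = (∑ j ∈ Finset.range (k - 1), w j * x ^ j) + w k * x ^ k := by
    rw [Finset.sum_range_succ]
    congr 1
    conv_lhs => rw [← h1]
    rw [Finset.sum_range_succ, hw1]
    ring
  set S : ℝ := ∑ j ∈ Finset.range (k - 1), w j * x ^ j with hS
  -- bound each low term
  have hterm : ∀ j ∈ Finset.range (k - 1), |w j * x ^ j| ≤ |x| ^ k / C := by
    intro j hj
    have hjk : j ≤ k - 2 := by
      have := Finset.mem_range.mp hj; omega
    have hjk' : j ≤ k := by omega
    have h3 : |w j * x ^ j| ≤ s ^ (k - j) * |x| ^ j := by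
      rw [abs_mul, abs_pow]
      exact mul_le_mul_of_nonneg_right (hwj j hjk) (by positivity)
    have h4 : s ^ (k - j) ≤ (|x| / C) ^ (k - j) :=
      pow_le_pow_left₀ hs.le hsle _
    have h5 : (|x| / C) ^ (k - j) * |x| ^ j = |x| ^ k / C ^ (k - j) := by
      rw [div_pow, div_mul_eq_mul_div, ← pow_add, Nat.sub_add_cancel hjk']
    have h6 : |x| ^ k / C ^ (k - j) ≤ |x| ^ k / C := by
      apply div_le_div_of_nonneg_left (by positivity) hC0
      calc C = C ^ 1 := (pow_one C).symm
        _ ≤ C ^ (k - j) := pow_le_pow_right₀ hC1 (by omega)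
    calc |w j * x ^ j| ≤ s ^ (k - j) * |x| ^ j := h3
      _ ≤ (|x| / C) ^ (k - j) * |x| ^ j :=
          mul_le_mul_of_nonneg_right h4 (by positivity)
      _ = |x| ^ k / C ^ (k - j) := h5
      _ ≤ |x| ^ k / C := h6
  have hScard : ((Finset.range (k - 1)).card : ℝ) ≤ (k : ℝ) := by
    simp only [Finset.card_range]
    exact_mod_cast Nat.sub_le k 1
  have hSbound : |S| ≤ c / 4 * |x| ^ k := by
    have h7 : |S| ≤ (Finset.range (k - 1)).card * (|x| ^ k / C) := by
      refine le_trans (Finset.abs_sum_le_sum_abs _ _) ?_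
      simpa using Finset.sum_le_card_nsmul _ _ _ hterm
    have h8 : ((Finset.range (k - 1)).card : ℝ) * (|x| ^ k / C) ≤ (k : ℝ) * (|x| ^ k / C) :=
      mul_le_mul_of_nonneg_right hScard (by positivity)
    have h9 : (k : ℝ) * (|x| ^ k / C) ≤ c / 4 * |x| ^ k := by
      rw [mul_div_assoc', div_le_iff₀ hC0, hCdef]
      have hxk : (0:ℝ) ≤ |x| ^ k := by positivity
      have heq : c / 4 * (1 + 4 * (k:ℝ) / c) = c / 4 + (k:ℝ) := by
        field_simp
      nlinarith [hxk, Nat.cast_nonneg (α := ℝ) k]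
    linarith
  have hRbound : |R x| ≤ c / 4 * |x| ^ k := by
    have h10 : |R x| ≤ A * |x| ^ (k + 1) := hR x
    have h11 : A * |x| ^ (k + 1) = (A * |x|) * |x| ^ k := by ring
    have h12 : |x| ≤ c / (4 * A) := le_trans hxu (min_le_right _ _)
    have h13 : A * |x| ≤ c / 4 := by
      rw [div_mul_eq_div_div] at h12
      calc A * |x| ≤ A * (c / 4 / A) := by
            exact mul_le_mul_of_nonneg_left h12 hA.le
        _ = c / 4 := by field_simp
    calc |R x| ≤ A * |x| ^ (k + 1) := h10
      _ = (A * |x|) * |x| ^ k := h11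
      _ ≤ c / 4 * |x| ^ k := mul_le_mul_of_nonneg_right h13 (by positivity)
  have hmain : c * |x| ^ k ≤ |w k * x ^ k| := by
    rw [abs_mul, abs_pow]
    exact mul_le_mul_of_nonneg_right hwk (by positivity)
  have hΦeq : Φ θ = w k * x ^ k + (S + R x) := by
    rw [hΦ θ, ← hx, h2]; ring
  have htri : |w k * x ^ k| - |S + R x| ≤ |Φ θ| := by
    rw [hΦeq]
    have := abs_add_le (w k * x ^ k + (S + R x)) (-(S + R x))
    simp only [add_neg_cancel_right, abs_neg] at this
    linarith
  have hSR : |S + R x| ≤ c / 2 * |x| ^ k := by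
    calc |S + R x| ≤ |S| + |R x| := abs_add_le _ _
      _ ≤ c / 4 * |x| ^ k + c / 4 * |x| ^ k := add_le_add hSbound hRbound
      _ = c / 2 * |x| ^ k := by ring
  linarith
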